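/- There exists a predictor φ (not necessarily computable) such that for every k ∈ ℕ and all ε, δ > 0, the uniform sample complexity 𝒩_φ(k, δ, ε) := sup{ N(φ, η, δ, ε) : η a labelling function with l(η) ≤ k } is finite. -/

import Mathlib

open scoped Classical

noncomputable section

/-- The finite set of all binary strings of length `t` (`X_t = {0,1}^t`). -/
def strings : ℕ → Finset (List Bool)
  | 0 => {[]}
  | t + 1 => ((strings t).image (List.cons false)) ∪ ((strings t).image (List.cons true))

/-- A code `c` (in the fixed Gödel enumeration of partial recursive functions given by
`Nat.Partrec.Code`) computes the partial function `f` from binary strings to `Bool`. -/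
def Computes (c : Nat.Partrec.Code) (f : List Bool →. Bool) : Prop :=
  ∀ x : List Bool, c.eval (Encodable.encode x) = (f x).map (fun b => (Encodable.encode b : ℕ))

/-- A labelling function: a partial recursive function from binary strings to `{0,1}`
whose domain is exactly `X_t` for some `t`. -/
structure LabellingFunction where
  f : List Bool →. Bool
  partrec : Partrec f
  t : ℕ
  dom : ∀ x : List Bool, (f x).Dom ↔ x.length = t

/-- The value of a labelling function (defaulting to `false` outside its domain). -/
def LabellingFunction.eval (η : LabellingFunction) (x : List Bool) : Bool :=
  if h : (η.f x).Dom then (η.f x).get h else false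

/-- The length `l(η)`: the number of binary digits of the minimal index of `η`
in the fixed enumeration of partial recursive functions. -/
def ell (η : LabellingFunction) : ℕ :=
  Nat.size (sInf {n : ℕ | Computes (Denumerable.ofNat Nat.Partrec.Code n) η.f})

/-- A predictor: a family of total functions `φ_n(x₁,y₁,…,xₙ,yₙ,x)`
(the family index `n` being the length of the list of labelled examples). -/
def Predictor : Type := List (List Bool × Bool) → List Bool → Bool

/-- A probability distribution on `X_t`. -/
structure FinDist (t : ℕ) where
  p : List Bool → ℝ
  nonneg : ∀ x, 0 ≤ p x
  sum_one : ∑ x ∈ strings t, p x = 1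

/-- Probability of a set (predicate) of strings under a distribution on `X_t`. -/
def FinDist.pr {t : ℕ} (P : FinDist t) (S : List Bool → Prop) : ℝ :=
  ∑ x ∈ (strings t).filter S, P.p x

/-- `δ_n(φ,η,ε)`: the supremum over all distributions `P` on `X_{t(η)}` of the `P^n`-probability
(i.i.d. sampling) that the `P`-probability of error of `φ` exceeds `ε`. -/
def delta (φ : Predictor) (η : LabellingFunction) (ε : ℝ) (n : ℕ) : ℝ :=
  sSup { r : ℝ | ∃ P : FinDist η.t,
    r = ∑ xs ∈ (Fintype.piFinset fun _ : Fin n => strings η.t).filter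
          (fun xs : Fin n → List Bool =>
            ε < P.pr fun x => φ (List.ofFn fun i => (xs i, η.eval (xs i))) x ≠ η.eval x),
        ∏ i, P.p (xs i) }

/-- The sample complexity `N(φ,η,δ,ε) = min{n : δ_n(φ,η,ε) ≤ δ}` (with `min ∅ = ∞`). -/
def sampleComplexity (φ : Predictor) (η : LabellingFunction) (δ ε : ℝ) : ℕ∞ :=
  sInf {N : ℕ∞ | ∃ n : ℕ, (n : ℕ∞) = N ∧ delta φ η ε n ≤ δ}

/-- The memorization predictor: look the query string up among the labelled examples. -/
def phiMem : Predictor := fun samples x =>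
  ((samples.find? (fun p => decide (p.1 = x))).map Prod.snd).getD false

lemma phiMem_seen (η : LabellingFunction) {n : ℕ} (xs : Fin n → List Bool) {x : List Bool}
    (h : ∃ i, xs i = x) :
    phiMem (List.ofFn fun i => (xs i, η.eval (xs i))) x = η.eval x := by
  obtain ⟨i, hi⟩ := h
  have hmem : (xs i, η.eval (xs i)) ∈ List.ofFn fun j => (xs j, η.eval (xs j)) :=
    List.mem_ofFn.2 ⟨i, rfl⟩
  unfold phiMem
  cases hf : List.find? (fun p => decide (p.1 = x)) (List.ofFn fun j => (xs j, η.eval (xs j))) with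
  | none =>
      rw [List.find?_eq_none] at hf
      exact absurd (by simp [hi]) (hf _ hmem)
  | some p =>
      have h1 := List.find?_some hf
      simp only [decide_eq_true_eq] at h1
      have h2 : p ∈ List.ofFn fun j => (xs j, η.eval (xs j)) := List.mem_of_find?_eq_some hf
      rw [List.mem_ofFn] at h2
      obtain ⟨j, hj⟩ := h2
      have hp2 : p.2 = η.eval p.1 := by rw [← hj]
      simp [hp2, h1]

lemma card_strings (t : ℕ) : (strings t).card = 2 ^ t := by
  induction t with
  | zero => rfl
  | succ t ih =>
    rw [strings, Finset.card_union_of_disjoint]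
    · rw [Finset.card_image_of_injective _ (List.cons_injective),
        Finset.card_image_of_injective _ (List.cons_injective), ih]
      ring
    · rw [Finset.disjoint_left]
      rintro a ha hb
      simp only [Finset.mem_image] at ha hb
      obtain ⟨l, -, rfl⟩ := ha
      obtain ⟨l', -, h⟩ := hb
      simp at h

lemma pr_nonneg {t : ℕ} (P : FinDist t) (S : List Bool → Prop) : 0 ≤ P.pr S :=
  Finset.sum_nonneg fun x _ => P.nonneg x

lemma pr_mono {t : ℕ} (P : FinDist t) {S T : List Bool → Prop} (h : ∀ x, S x → T x) :
    P.pr S ≤ P.pr T := by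
  apply Finset.sum_le_sum_of_subset_of_nonneg
  · intro x hx
    rw [Finset.mem_filter] at *
    exact ⟨hx.1, h _ hx.2⟩
  · intro x _ _
    exact P.nonneg x

lemma term_bound {p : ℝ} (h0 : 0 ≤ p) (h1 : p ≤ 1) (n : ℕ) :
    ((n : ℝ) + 1) * (p * (1 - p) ^ n) ≤ 1 := by
  set q := 1 - p with hqdef
  have hq0 : 0 ≤ q := by rw [hqdef]; linarith
  have hq1 : q ≤ 1 := by rw [hqdef]; linarith
  have hgeom : (∑ i ∈ Finset.range (n + 1), q ^ i) * (1 - q) = 1 - q ^ (n + 1) := by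
    have h := geom_sum_mul q (n + 1)
    nlinarith [h]
  have hle : ((n : ℝ) + 1) * q ^ n ≤ ∑ i ∈ Finset.range (n + 1), q ^ i := by
    have hstep : ∀ i ∈ Finset.range (n + 1), q ^ n ≤ q ^ i := fun i hi =>
      pow_le_pow_of_le_one hq0 hq1 (Nat.le_of_lt_succ (Finset.mem_range.mp hi))
    calc ((n : ℝ) + 1) * q ^ n = ∑ _i ∈ Finset.range (n + 1), q ^ n := by
          rw [Finset.sum_const, Finset.card_range]
          simp
      _ ≤ _ := Finset.sum_le_sum hstep
  have hp : p = 1 - q := by rw [hqdef]; ring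
  have hqn1 : 0 ≤ q ^ (n + 1) := pow_nonneg hq0 _
  calc ((n : ℝ) + 1) * (p * q ^ n) = (((n : ℝ) + 1) * q ^ n) * (1 - q) := by rw [hp]; ring
    _ ≤ (∑ i ∈ Finset.range (n + 1), q ^ i) * (1 - q) :=
        mul_le_mul_of_nonneg_right hle (by linarith)
    _ = 1 - q ^ (n + 1) := hgeom
    _ ≤ 1 := by linarith

lemma delta_le (η : LabellingFunction) {ε δ : ℝ} (hε : 0 < ε) (hδ : 0 < δ) (n : ℕ)
    (hn : (2 : ℝ) ^ η.t ≤ ((n : ℝ) + 1) * ε * δ) : delta phiMem η ε n ≤ δ := by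
  apply Real.sSup_le _ hδ.le
  rintro r ⟨P, rfl⟩
  set all := Fintype.piFinset fun _ : Fin n => strings η.t with hall
  set Bad := all.filter (fun xs : Fin n → List Bool =>
      ε < P.pr fun x => phiMem (List.ofFn fun i => (xs i, η.eval (xs i))) x ≠ η.eval x) with hBad
  have hp0 : ∀ x, 0 ≤ P.p x := P.nonneg
  have hp1 : ∀ x ∈ strings η.t, P.p x ≤ 1 := by
    intro x hx
    calc P.p x ≤ ∑ y ∈ strings η.t, P.p y := Finset.single_le_sum (fun y _ => hp0 y) hx
      _ = 1 := P.sum_one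
  have hprod : ∀ xs : Fin n → List Bool, 0 ≤ ∏ i, P.p (xs i) :=
    fun xs => Finset.prod_nonneg fun i _ => hp0 _
  have h1 : ε * ∑ xs ∈ Bad, ∏ i, P.p (xs i)
      ≤ ∑ xs ∈ Bad, (P.pr fun x => ∀ i, xs i ≠ x) * ∏ i, P.p (xs i) := by
    rw [Finset.mul_sum]
    apply Finset.sum_le_sum
    intro xs hxs
    apply mul_le_mul_of_nonneg_right _ (hprod xs)
    rw [hBad, Finset.mem_filter] at hxs
    refine le_trans (le_of_lt hxs.2) (pr_mono P ?_)
    intro x hx i hi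
    exact hx (phiMem_seen η xs ⟨i, hi⟩)
  have h1' : ∑ xs ∈ Bad, (P.pr fun x => ∀ i, xs i ≠ x) * ∏ i, P.p (xs i)
      ≤ ∑ xs ∈ all, (P.pr fun x => ∀ i, xs i ≠ x) * ∏ i, P.p (xs i) := by
    apply Finset.sum_le_sum_of_subset_of_nonneg (Finset.filter_subset _ _)
    intro xs _ _
    exact mul_nonneg (pr_nonneg P _) (hprod xs)
  have h2 : ∑ xs ∈ all, (P.pr fun x => ∀ i, xs i ≠ x) * ∏ i, P.p (xs i)
      = ∑ x ∈ strings η.t, P.p x * (1 - P.p x) ^ n := by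
    have hpr : ∀ xs : Fin n → List Bool,
        (P.pr fun x => ∀ i, xs i ≠ x)
          = ∑ x ∈ strings η.t, if (∀ i, xs i ≠ x) then P.p x else 0 := by
      intro xs
      rw [FinDist.pr, Finset.sum_filter]
      exact Finset.sum_congr rfl fun a _ => by by_cases hc : ∀ i, xs i ≠ a <;> simp [hc]
    calc ∑ xs ∈ all, (P.pr fun x => ∀ i, xs i ≠ x) * ∏ i, P.p (xs i)
        = ∑ xs ∈ all, ∑ x ∈ strings η.t,
            (if (∀ i, xs i ≠ x) then P.p x else 0) * ∏ i, P.p (xs i) := by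
          apply Finset.sum_congr rfl
          intro xs _
          rw [hpr, Finset.sum_mul]
      _ = ∑ x ∈ strings η.t, ∑ xs ∈ all,
            (if (∀ i, xs i ≠ x) then P.p x else 0) * ∏ i, P.p (xs i) :=
          Finset.sum_comm
      _ = ∑ x ∈ strings η.t, P.p x * (1 - P.p x) ^ n := by
          apply Finset.sum_congr rfl
          intro x hx
          have hset : all.filter (fun xs : Fin n → List Bool => ∀ i, xs i ≠ x)
              = Fintype.piFinset (fun _ : Fin n => (strings η.t).erase x) := by
            ext xs
            simp only [Finset.mem_filter, hall, Fintype.mem_piFinset, Finset.mem_erase]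
            constructor
            · rintro ⟨ha, hb⟩ i
              exact ⟨hb i, ha i⟩
            · intro h
              exact ⟨fun i => (h i).2, fun i => (h i).1⟩
          have herase : ∑ y ∈ (strings η.t).erase x, P.p y = 1 - P.p x := by
            have hh := Finset.sum_erase_add (strings η.t) P.p hx
            rw [P.sum_one] at hh
            linarith
          calc ∑ xs ∈ all, (if (∀ i, xs i ≠ x) then P.p x else 0) * ∏ i, P.p (xs i)
              = ∑ xs ∈ all, if (∀ i, xs i ≠ x) then P.p x * ∏ i, P.p (xs i) else 0 := by
                apply Finset.sum_congr rfl
                intro xs _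
                split <;> simp
            _ = ∑ xs ∈ all.filter (fun xs : Fin n → List Bool => ∀ i, xs i ≠ x),
                  P.p x * ∏ i, P.p (xs i) := (Finset.sum_filter _ _).symm
            _ = P.p x * ∑ xs ∈ Fintype.piFinset (fun _ : Fin n => (strings η.t).erase x),
                  ∏ i, P.p (xs i) := by rw [hset, Finset.mul_sum]
            _ = P.p x * ∏ _i : Fin n, ∑ y ∈ (strings η.t).erase x, P.p y := by
                rw [Finset.prod_univ_sum]
            _ = P.p x * (1 - P.p x) ^ n := by
                rw [Finset.prod_const, herase, Finset.card_univ, Fintype.card_fin]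
  have h3 : ((n : ℝ) + 1) * ∑ x ∈ strings η.t, P.p x * (1 - P.p x) ^ n ≤ 2 ^ η.t := by
    rw [Finset.mul_sum]
    calc ∑ x ∈ strings η.t, ((n : ℝ) + 1) * (P.p x * (1 - P.p x) ^ n)
        ≤ ∑ _x ∈ strings η.t, (1 : ℝ) :=
          Finset.sum_le_sum fun x hx => term_bound (hp0 x) (hp1 x hx) n
      _ = (2 : ℝ) ^ η.t := by
          rw [Finset.sum_const, card_strings]
          simp
  have hkey : (((n : ℝ) + 1) * ε) * (∑ xs ∈ Bad, ∏ i, P.p (xs i))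
      ≤ (((n : ℝ) + 1) * ε) * δ := by
    have hn1 : (0 : ℝ) ≤ (n : ℝ) + 1 := by positivity
    have e1 : ((n : ℝ) + 1) * (ε * ∑ xs ∈ Bad, ∏ i, P.p (xs i))
        ≤ ((n : ℝ) + 1) * ∑ x ∈ strings η.t, P.p x * (1 - P.p x) ^ n :=
      mul_le_mul_of_nonneg_left (le_trans h1 (le_of_le_of_eq h1' h2)) hn1
    calc (((n : ℝ) + 1) * ε) * (∑ xs ∈ Bad, ∏ i, P.p (xs i))
        = ((n : ℝ) + 1) * (ε * ∑ xs ∈ Bad, ∏ i, P.p (xs i)) := by ring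
      _ ≤ ((n : ℝ) + 1) * ∑ x ∈ strings η.t, P.p x * (1 - P.p x) ^ n := e1
      _ ≤ 2 ^ η.t := h3
      _ ≤ ((n : ℝ) + 1) * ε * δ := hn
  exact le_of_mul_le_mul_left hkey (by positivity)

lemma sc_le (η : LabellingFunction) {ε δ : ℝ} (hε : 0 < ε) (hδ : 0 < δ) :
    sampleComplexity phiMem η δ ε ≤ ((⌈(2 : ℝ) ^ η.t / (ε * δ)⌉₊ : ℕ) : ℕ∞) := by
  apply sInf_le
  refine ⟨_, rfl, ?_⟩
  apply delta_le η hε hδ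
  have hεδ : 0 < ε * δ := mul_pos hε hδ
  have h1 : (2 : ℝ) ^ η.t / (ε * δ) ≤ (⌈(2 : ℝ) ^ η.t / (ε * δ)⌉₊ : ℝ) := Nat.le_ceil _
  rw [div_le_iff₀ hεδ] at h1
  have h2 : ((⌈(2 : ℝ) ^ η.t / (ε * δ)⌉₊ : ℝ)) * (ε * δ)
      ≤ ((⌈(2 : ℝ) ^ η.t / (ε * δ)⌉₊ : ℝ) + 1) * (ε * δ) := by nlinarith
  calc (2 : ℝ) ^ η.t ≤ _ := h1
    _ ≤ _ := h2
    _ = ((⌈(2 : ℝ) ^ η.t / (ε * δ)⌉₊ : ℝ) + 1) * ε * δ := by ring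

lemma computes_self (η : LabellingFunction) : ∃ c : Nat.Partrec.Code, Computes c η.f := by
  obtain ⟨c, hc⟩ := Nat.Partrec.Code.exists_code.mp η.partrec
  refine ⟨c, fun x => ?_⟩
  rw [hc]
  simp [Encodable.encodek]

lemma computes_unique {c : Nat.Partrec.Code} {f g : List Bool →. Bool}
    (hf : Computes c f) (hg : Computes c g) : f = g := by
  funext x
  have h : (f x).map (fun b => (Encodable.encode b : ℕ))
      = (g x).map (fun b => (Encodable.encode b : ℕ)) := (hf x).symm.trans (hg x)
  apply Part.ext
  intro b
  constructor
  · intro hb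
    have h1 : (Encodable.encode b : ℕ) ∈ (g x).map (fun b => (Encodable.encode b : ℕ)) :=
      h ▸ Part.mem_map _ hb
    obtain ⟨b', hb', he⟩ := (Part.mem_map_iff _).mp h1
    cases Encodable.encode_injective he
    exact hb'
  · intro hb
    have h1 : (Encodable.encode b : ℕ) ∈ (f x).map (fun b => (Encodable.encode b : ℕ)) :=
      h.symm ▸ Part.mem_map _ hb
    obtain ⟨b', hb', he⟩ := (Part.mem_map_iff _).mp h1
    cases Encodable.encode_injective he
    exact hb'

lemma t_unique {η η' : LabellingFunction} (h : η.f = η'.f) : η.t = η'.t := by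
  have h1 : (η.f (List.replicate η.t false)).Dom := (η.dom _).mpr (by simp)
  have h2 := (η'.dom (List.replicate η.t false)).mp (h ▸ h1)
  simpa using h2

def tOf (m : ℕ) : ℕ :=
  if h : ∃ η : LabellingFunction, Computes (Denumerable.ofNat Nat.Partrec.Code m) η.f
  then h.choose.t else 0

lemma tOf_eq {m : ℕ} {η : LabellingFunction}
    (h : Computes (Denumerable.ofNat Nat.Partrec.Code m) η.f) : tOf m = η.t := by
  have hex : ∃ η' : LabellingFunction, Computes (Denumerable.ofNat Nat.Partrec.Code m) η'.f :=
    ⟨η, h⟩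
  rw [tOf, dif_pos hex]
  exact t_unique (computes_unique hex.choose_spec h)

/-- There exists a (not necessarily computable) predictor `φ` whose uniform sample complexity
`𝒩_φ(k,δ,ε) = sup{ N(φ,η,δ,ε) : η a labelling function with l(η) ≤ k }` is finite
for every `k` and all `ε, δ > 0`. -/
theorem exists_predictor_uniform_sample_complexity_finite :
    ∃ φ : Predictor, ∀ k : ℕ, ∀ ε δ : ℝ, 0 < ε → 0 < δ →
      sSup {N : ℕ∞ | ∃ η : LabellingFunction, ell η ≤ k ∧ N = sampleComplexity φ η δ ε}
        < ⊤ := by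
  refine ⟨phiMem, fun k ε δ hε hδ => ?_⟩
  set T := (Finset.range (2 ^ k)).sup tOf with hT
  have hbound : ∀ N ∈ {N : ℕ∞ | ∃ η : LabellingFunction, ell η ≤ k ∧
      N = sampleComplexity phiMem η δ ε},
      N ≤ ((⌈(2 : ℝ) ^ T / (ε * δ)⌉₊ : ℕ) : ℕ∞) := by
    rintro N ⟨η, hη, rfl⟩
    refine le_trans (sc_le η hε hδ) ?_
    have ht : η.t ≤ T := by
      obtain ⟨c, hc⟩ := computes_self η
      have hne : {m : ℕ | Computes (Denumerable.ofNat Nat.Partrec.Code m) η.f}.Nonempty :=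
        ⟨Encodable.encode c, by
          show Computes (Denumerable.ofNat Nat.Partrec.Code (Encodable.encode c)) η.f
          rwa [Denumerable.ofNat_encode]⟩
      have hm := Nat.sInf_mem hne
      rw [ell] at hη
      have hlt : sInf {m : ℕ | Computes (Denumerable.ofNat Nat.Partrec.Code m) η.f} < 2 ^ k :=
        Nat.size_le.mp hη
      calc η.t = tOf (sInf {m : ℕ | Computes (Denumerable.ofNat Nat.Partrec.Code m) η.f}) :=
            (tOf_eq hm).symm
        _ ≤ T := Finset.le_sup (Finset.mem_range.mpr hlt)
    have hceil : ⌈(2 : ℝ) ^ η.t / (ε * δ)⌉₊ ≤ ⌈(2 : ℝ) ^ T / (ε * δ)⌉₊ := by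
      apply Nat.ceil_le_ceil
      gcongr
      exact one_le_two
    exact_mod_cast Nat.cast_le.mpr hceil
  exact lt_of_le_of_lt (sSup_le hbound) (WithTop.coe_lt_top _)
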